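/- Let (K,v) be a valued field of residue characteristic p, and let f(z) = z^d + a_{d−1}z^{d−1} + ⋯ + a₁z ∈ 𝒪[z] be a monic polynomial of degree d ≥ 2 fixing 0 with p | d, which is postcritically bounded at v. Then v(aᵢ) > 0 for every index i with v(i) < v(d). Consequently, the reduction of f modulo the maximal ideal has the form f̄(z) = F̄(z^{p^ℓ}) where ℓ = v_p(d) and F̄ is a nonconstant polynomial over the residue field. -/
import Mathlib


open Polynomial

section aux
variable {K : Type*} [Field K] (v : AddValuation K (WithTop ℝ))

lemma aux_coe_nsmul (n : ℕ) (c : ℝ) :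
    n • ((c : WithTop ℝ)) = (((n : ℝ) * c : ℝ) : WithTop ℝ) := by
  induction n with
  | zero => simp
  | succ k ih =>
    rw [succ_nsmul, ih, ← WithTop.coe_add]
    congr 1
    push_cast
    ring

lemma aux_nat_nonneg (n : ℕ) : 0 ≤ v ((n : K)) := by
  induction n with
  | zero =>
    rw [Nat.cast_zero, v.map_zero]; exact le_top
  | succ k ih =>
    push_cast
    exact v.map_le_add ih (le_of_eq v.map_one.symm)

lemma aux_int_nonneg (z : ℤ) : 0 ≤ v ((z : K)) := by
  obtain ⟨n, h | h⟩ := z.eq_nat_or_neg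
  · subst h; push_cast; exact aux_nat_nonneg v n
  · subst h; push_cast; rw [v.map_neg]; exact aux_nat_nonneg v n

lemma aux_coprime_val_zero {p m : ℕ} (hp : p.Prime) (hvp : 0 < v ((p : K)))
    (hm : ¬ p ∣ m) : v ((m : K)) = 0 := by
  refine le_antisymm ?_ (aux_nat_nonneg v m)
  by_contra hlt
  push_neg at hlt
  have hcop : Nat.Coprime p m := (Nat.Prime.coprime_iff_not_dvd hp).2 hm
  have hb := Nat.gcd_eq_gcd_ab p m
  rw [hcop] at hb
  have hK : (1 : K) = (p : K) * ((Nat.gcdA p m : ℤ) : K) + (m : K) * ((Nat.gcdB p m : ℤ) : K) := by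
    have := congrArg (fun z : ℤ => (z : K)) hb
    push_cast at this ⊢
    linear_combination this
  have h1 : (0 : WithTop ℝ) < v (1 : K) := by
    rw [hK]
    apply v.map_lt_add
    · rw [v.map_mul]
      calc (0 : WithTop ℝ) < v ((p : K)) := hvp
        _ ≤ _ := le_add_of_nonneg_right (aux_int_nonneg v _)
    · rw [v.map_mul]
      calc (0 : WithTop ℝ) < v ((m : K)) := hlt
        _ ≤ _ := le_add_of_nonneg_right (aux_int_nonneg v _)
  rw [v.map_one] at h1
  exact lt_irrefl 0 h1

lemma aux_prod_coeff_nonneg (s : Multiset K) (h : ∀ γ ∈ s, 0 ≤ v γ) (k : ℕ) :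
    0 ≤ v ((s.map fun γ => X - C γ).prod.coeff k) := by
  induction s using Multiset.induction_on generalizing k with
  | empty =>
    simp only [Multiset.map_zero, Multiset.prod_zero, coeff_one]
    split
    · exact le_of_eq v.map_one.symm
    · rw [v.map_zero]; exact le_top
  | cons a s ih =>
    have ha : 0 ≤ v a := h a (Multiset.mem_cons_self a s)
    have hs : ∀ γ ∈ s, 0 ≤ v γ := fun γ hγ => h γ (Multiset.mem_cons_of_mem hγ)
    rw [Multiset.map_cons, Multiset.prod_cons, sub_mul]
    set Q := (s.map fun γ => X - C γ).prod with hQ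
    cases k with
    | zero =>
      rw [coeff_sub, coeff_X_mul_zero, coeff_C_mul, zero_sub, v.map_neg, v.map_mul]
      exact add_nonneg ha (ih hs 0)
    | succ n =>
      rw [coeff_sub, coeff_X_mul, coeff_C_mul]
      refine v.map_le_sub (ih hs n) ?_
      rw [v.map_mul]
      exact add_nonneg ha (ih hs (n+1))

end aux

/-- Let `(K,v)` be a (complete, algebraically closed) valued field of
characteristic `0` and residue characteristic `p` (i.e. `v(p) > 0`), and let
`f(z) = z^d + a_{d-1}z^{d-1} + ⋯ + a₁ z` be a monic polynomial of degree `d ≥ 2` with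
integral coefficients, fixing `0`, with `p ∣ d`, which is postcritically bounded at `v`
(the valuations of the forward orbits of critical points are bounded below). Then
`v(aᵢ) > 0` for every index `i` with `v(i) < v(d)`; consequently, every coefficient whose
index is not divisible by `p^ℓ` (where `ℓ = v_p(d)`) has positive valuation, i.e. the
reduction of `f` has the form `F̄(z^{p^ℓ})` with `F̄` nonconstant. -/
theorem stmt_9 {K : Type*} [Field K] [IsAlgClosed K] [CharZero K]
    (v : AddValuation K (WithTop ℝ)) (p : ℕ) (hp : p.Prime)
    (hvp : 0 < v ((p : K)))
    (f : Polynomial K) (hf : f.Monic) (d : ℕ) (hdeg : f.natDegree = d)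
    (hd2 : 2 ≤ d) (hpd : p ∣ d) (h0 : f.coeff 0 = 0)
    (hint : ∀ i : ℕ, 0 ≤ v (f.coeff i))
    (hpcb : ∃ B : ℝ, ∀ γ ∈ f.derivative.roots, ∀ n : ℕ,
      (B : WithTop ℝ) ≤ v ((fun t => f.eval t)^[n] γ)) :
    (∀ i : ℕ, v ((i : K)) < v ((d : K)) → 0 < v (f.coeff i)) ∧
      (∀ i : ℕ, ¬ (p ^ (d.factorization p) ∣ i) → 0 < v (f.coeff i)) := by
  obtain ⟨B, hB⟩ := hpcb
  have hd0 : d ≠ 0 := by omega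
  have hdK : (d : K) ≠ 0 := Nat.cast_ne_zero.mpr hd0
  set g := f.derivative with hg
  -- natDegree of derivative
  have hcoefftop : g.coeff (d - 1) = (d : K) := by
    rw [hg, coeff_derivative]
    rw [show d - 1 + 1 = d from by omega]
    rw [← hdeg, hf.coeff_natDegree, hdeg, one_mul, Nat.cast_sub (by omega), Nat.cast_one]
    ring
  have hgdeg : g.natDegree = d - 1 := by
    refine le_antisymm (hdeg ▸ natDegree_derivative_le f) ?_
    exact le_natDegree_of_ne_zero (by rw [hcoefftop]; exact hdK)
  have hglc : g.leadingCoeff = (d : K) := by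
    rw [leadingCoeff, hgdeg, hcoefftop]
  have hcard : Multiset.card g.roots = g.natDegree :=
    (splits_iff_card_roots).mp (IsAlgClosed.splits g)
  have hprod := C_leadingCoeff_mul_prod_multiset_X_sub_C hcard
  -- first conjunct
  have main : ∀ i : ℕ, v ((i : K)) < v ((d : K)) → 0 < v (f.coeff i) := by
    intro i hi
    by_contra hle
    push_neg at hle
    have hv0 : v (f.coeff i) = 0 := le_antisymm hle (hint i)
    have hi0 : i ≠ 0 := by
      rintro rfl
      rw [Nat.cast_zero, v.map_zero] at hi
      exact not_top_lt hi
    -- the key coefficient of g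
    have hcoeffg : g.coeff (i - 1) = f.coeff i * (i : K) := by
      rw [hg, coeff_derivative]
      have h1 : i - 1 + 1 = i := by omega
      rw [h1, Nat.cast_sub (by omega : 1 ≤ i), Nat.cast_one]
      ring
    have hvcoeffg : v (g.coeff (i - 1)) = v ((i : K)) := by
      rw [hcoeffg, v.map_mul, hv0, zero_add]
    -- there is a root of negative valuation
    have hroot : ∃ γ ∈ g.roots, v γ < 0 := by
      by_contra h
      push_neg at h
      have h1 : v (g.coeff (i - 1)) ≥ v ((d : K)) := by
        conv_lhs => rw [← hprod]
        rw [coeff_C_mul, v.map_mul, hglc]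
        exact le_add_of_nonneg_right (aux_prod_coeff_nonneg v _ h _)
      rw [hvcoeffg] at h1
      exact absurd hi (not_lt.mpr h1)
    obtain ⟨γ, hγmem, hγneg⟩ := hroot
    have hγtop : v γ ≠ ⊤ := fun h => by
      rw [h] at hγneg; exact not_top_lt hγneg
    obtain ⟨c, hc⟩ := WithTop.ne_top_iff_exists.mp hγtop
    have hcneg : c < 0 := by
      rw [← hc] at hγneg
      exact_mod_cast hγneg
    -- key step lemma
    have key : ∀ (x : K) (cx : ℝ), cx < 0 → v x ≤ (cx : ℝ) →
        v (f.eval x) ≤ (((d : ℝ) * cx : ℝ) : WithTop ℝ) := by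
      intro x cx hcx hvx
      have hxt : v x ≠ ⊤ := ne_top_of_le_ne_top WithTop.coe_ne_top hvx
      obtain ⟨c', hc'⟩ := WithTop.ne_top_iff_exists.mp hxt
      have hc'le : c' ≤ cx := by rw [← hc'] at hvx; exact_mod_cast hvx
      have hc'neg : c' < 0 := lt_of_le_of_lt hc'le hcx
      have hxpow : ∀ j : ℕ, v (x ^ j) = (((j : ℝ) * c' : ℝ) : WithTop ℝ) := by
        intro j
        rw [v.map_pow, ← hc', aux_coe_nsmul]
      rw [eval_eq_sum_range, hdeg, Finset.sum_range_succ,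
        (show f.coeff d = 1 from hdeg ▸ hf.coeff_natDegree), one_mul]
      have hS : (((d : ℝ) * c' : ℝ) : WithTop ℝ) <
          v (∑ j ∈ Finset.range d, f.coeff j * x ^ j) := by
        apply v.map_lt_sum (WithTop.coe_ne_top)
        intro j hj
        rw [Finset.mem_range] at hj
        rw [v.map_mul, hxpow j]
        calc (((d : ℝ) * c' : ℝ) : WithTop ℝ) < (((j : ℝ) * c' : ℝ) : WithTop ℝ) := by
              exact_mod_cast mul_lt_mul_of_neg_right (by exact_mod_cast hj) hc'neg
          _ ≤ v (f.coeff j) + (((j : ℝ) * c' : ℝ) : WithTop ℝ) :=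
              le_add_of_nonneg_left (hint j)
      have heq : v (∑ j ∈ Finset.range d, f.coeff j * x ^ j + x ^ d) = v (x ^ d) := by
        apply v.map_add_eq_of_lt_right
        rw [hxpow d]; exact hS
      rw [heq, hxpow d]
      exact_mod_cast mul_le_mul_of_nonneg_left hc'le (by positivity)
    -- iterate
    have iter : ∀ n : ℕ, v ((fun t => f.eval t)^[n] γ) ≤ (((d : ℝ) ^ n * c : ℝ) : WithTop ℝ) := by
      intro n
      induction n with
      | zero => simpa [hc.symm] using le_of_eq (hc.symm)
      | succ n ih =>
        rw [Function.iterate_succ_apply']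
        have hcx : (d : ℝ) ^ n * c < 0 :=
          mul_neg_of_pos_of_neg (pow_pos (by positivity) n) hcneg
        have := key _ _ hcx ih
        refine le_trans this (le_of_eq ?_)
        congr 1
        ring
    -- contradiction with boundedness
    obtain ⟨n, hn⟩ := pow_unbounded_of_one_lt (B / c) (by exact_mod_cast hd2 : (1 : ℝ) < d)
    have hlt : (d : ℝ) ^ n * c < B := by
      have := mul_lt_mul_of_neg_right hn hcneg
      rwa [div_mul_cancel₀ B (ne_of_lt hcneg)] at this
    have hcontr := lt_of_le_of_lt (le_trans (hB γ hγmem n) (iter n))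
      (by exact_mod_cast hlt : (((d : ℝ) ^ n * c : ℝ) : WithTop ℝ) < (B : WithTop ℝ))
    exact lt_irrefl _ hcontr
  refine ⟨main, ?_⟩
  -- second conjunct
  intro i hi
  apply main
  have hi0 : i ≠ 0 := by rintro rfl; exact hi (dvd_zero _)
  set a := i.factorization p with ha
  set l := d.factorization p with hl
  have hal : a < l := by
    by_contra hge
    push_neg at hge
    exact hi ((Nat.Prime.pow_dvd_iff_le_factorization hp hi0).mpr hge)
  -- decompositions
  have hidec : p ^ a * (i / p ^ a) = i := Nat.ordProj_mul_ordCompl_eq_self i p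
  have hddec : p ^ l * (d / p ^ l) = d := Nat.ordProj_mul_ordCompl_eq_self d p
  have hmi : ¬ p ∣ (i / p ^ a) := Nat.not_dvd_ordCompl hp hi0
  have hmd : ¬ p ∣ (d / p ^ l) := Nat.not_dvd_ordCompl hp hd0
  have hptop : v ((p : K)) ≠ ⊤ :=
    (v.ne_top_iff).mpr (Nat.cast_ne_zero.mpr hp.pos.ne')
  obtain ⟨r, hr⟩ := WithTop.ne_top_iff_exists.mp hptop
  have hrpos : 0 < r := by rw [← hr] at hvp; exact_mod_cast hvp
  have hvi : v ((i : K)) = (((a : ℝ) * r : ℝ) : WithTop ℝ) := by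
    rw [← hidec, Nat.cast_mul, Nat.cast_pow]
    rw [v.map_mul, v.map_pow, aux_coprime_val_zero v hp hvp hmi, add_zero, ← hr, aux_coe_nsmul]
  have hvd : (((l : ℝ) * r : ℝ) : WithTop ℝ) ≤ v ((d : K)) := by
    conv_rhs => rw [← hddec, Nat.cast_mul, Nat.cast_pow]
    rw [v.map_mul, v.map_pow, ← hr, aux_coe_nsmul]
    exact le_add_of_nonneg_right (aux_nat_nonneg v _)
  rw [hvi]
  refine lt_of_lt_of_le ?_ hvd
  exact_mod_cast mul_lt_mul_of_pos_right (by exact_mod_cast hal) hrpos
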